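/- Let A be self-adjoint compact, B nonnegative compact, J self-adjoint bounded with bounded inverse, and assume 0 ∈ ρ(J⁻¹ + A + iB). Define the unitary operator S = I − 2i B^{1/2}(J⁻¹ + A + iB)⁻¹ B^{1/2}. Then for every θ ∈ (0,2π): dim Ker(S − e^{iθ}I) = dim Ker(J⁻¹ + A + cot(θ/2)·B). -/

import Mathlib

variable {K : Type*} [NormedAddCommGroup K] [InnerProductSpace ℂ K] [CompleteSpace K]

omit [CompleteSpace K] in
lemma rank_ker_one_sub_mul (X Y : K →L[ℂ] K) :
    Module.rank ℂ (LinearMap.ker ((1 - X * Y : K →L[ℂ] K) : K →ₗ[ℂ] K)) =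
      Module.rank ℂ (LinearMap.ker ((1 - Y * X : K →L[ℂ] K) : K →ₗ[ℂ] K)) := by
  have mem1 : ∀ x : K, x ∈ LinearMap.ker ((1 - X * Y : K →L[ℂ] K) : K →ₗ[ℂ] K) ↔ X (Y x) = x := by
    intro x
    simp only [LinearMap.mem_ker, ContinuousLinearMap.coe_coe, ContinuousLinearMap.coe_sub', Pi.sub_apply,
      ContinuousLinearMap.one_apply, ContinuousLinearMap.mul_apply]
    exact ⟨fun h => (sub_eq_zero.mp h).symm, fun h => sub_eq_zero.mpr h.symm⟩
  have mem2 : ∀ x : K, x ∈ LinearMap.ker ((1 - Y * X : K →L[ℂ] K) : K →ₗ[ℂ] K) ↔ Y (X x) = x := by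
    intro x
    simp only [LinearMap.mem_ker, ContinuousLinearMap.coe_coe, ContinuousLinearMap.coe_sub', Pi.sub_apply,
      ContinuousLinearMap.one_apply, ContinuousLinearMap.mul_apply]
    exact ⟨fun h => (sub_eq_zero.mp h).symm, fun h => sub_eq_zero.mpr h.symm⟩
  have e : LinearMap.ker ((1 - X * Y : K →L[ℂ] K) : K →ₗ[ℂ] K) ≃ₗ[ℂ] LinearMap.ker ((1 - Y * X : K →L[ℂ] K) : K →ₗ[ℂ] K) :=
    { toFun := fun x => ⟨Y x, by rw [mem2, (mem1 x).mp x.2]⟩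
      map_add' := by intro a b; ext; exact map_add Y a.1 b.1
      map_smul' := by intro m a; ext; exact map_smul Y m a.1
      invFun := fun y => ⟨X y, by rw [mem1, (mem2 y).mp y.2]⟩
      left_inv := by intro x; ext; exact (mem1 x).mp x.2
      right_inv := by intro y; ext; exact (mem2 y).mp y.2 }
  exact e.rank_eq

theorem stmt9 (A B J J' sB R : K →L[ℂ] K)
    (hA : IsSelfAdjoint A) (hAc : IsCompactOperator A)
    (hBc : IsCompactOperator B) (hB : B.IsPositive)
    (hJ : IsSelfAdjoint J) (hJJ' : J * J' = 1) (hJ'J : J' * J = 1)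
    (hsB : sB.IsPositive) (hsB2 : sB * sB = B)
    (hR : (J' + A + Complex.I • B) * R = 1) (hR' : R * (J' + A + Complex.I • B) = 1)
    (θ : ℝ) (hθ : θ ∈ Set.Ioo 0 (2 * Real.pi)) :
    Module.rank ℂ (LinearMap.ker
        ((((1 - (2 * Complex.I) • (sB * R * sB)) -
          Complex.exp ((θ : ℂ) * Complex.I) • (1 : K →L[ℂ] K)) : K →L[ℂ] K) : K →ₗ[ℂ] K)) =
      Module.rank ℂ (LinearMap.ker
        (((J' + A + (Real.cos (θ / 2) / Real.sin (θ / 2)) • B : K →L[ℂ] K) : K →ₗ[ℂ] K))) := by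
  obtain ⟨hθ0, hθ2⟩ := hθ
  have hs : Real.sin (θ / 2) ≠ 0 := by
    have h1 : 0 < θ / 2 := by linarith
    have h2 : θ / 2 < Real.pi := by linarith
    exact ne_of_gt (Real.sin_pos_of_pos_of_lt_pi h1 h2)
  set s : ℝ := Real.sin (θ / 2) with hsdef
  set c2 : ℝ := Real.cos (θ / 2) with hc2def
  set μ : ℂ := Complex.exp ((θ : ℂ) * Complex.I) with hμdef
  set T : K →L[ℂ] K := J' + A + Complex.I • B with hTdef
  set α : ℂ := Complex.I - (c2 / s : ℝ) with hαdef
  set M : K →L[ℂ] K := α • (R * sB) with hMdef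
  -- key scalar identity
  have hcos : Real.cos θ = 1 - 2 * s ^ 2 := by
    have h := Real.cos_two_mul (θ / 2)
    rw [show 2 * (θ / 2) = θ by ring] at h
    nlinarith [Real.sin_sq_add_cos_sq (θ / 2)]
  have hsin : Real.sin θ = 2 * s * c2 := by
    have := Real.sin_two_mul (θ / 2)
    rw [show 2 * (θ / 2) = θ by ring] at this
    linarith
  have hpyth : (s : ℂ) ^ 2 + (c2 : ℂ) ^ 2 = 1 := by
    exact_mod_cast Real.sin_sq_add_cos_sq (θ / 2)
  have hμval : μ = Complex.cos θ + Complex.sin θ * Complex.I := by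
    rw [hμdef, Complex.exp_mul_I]
  have hkey : (1 - μ) * α = 2 * Complex.I := by
    rw [hμval, hαdef, ← Complex.ofReal_cos, ← Complex.ofReal_sin, hcos, hsin]
    have hsC : (s : ℂ) ≠ 0 := by exact_mod_cast hs
    push_cast
    field_simp
    ring_nf
    linear_combination (2 * (s : ℂ) * Complex.I) * hpyth +
      (-2 * (s : ℂ) ^ 2 * (c2 : ℂ)) * Complex.I_sq
  have hμ1 : (1 : ℂ) - μ ≠ 0 := by
    intro h
    rw [h, zero_mul] at hkey
    simp at hkey
  -- operator identity 1
  have hsbm : sB * M = α • (sB * R * sB) := by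
    rw [hMdef, mul_smul_comm, mul_assoc]
  have hop1 : (1 - (2 * Complex.I) • (sB * R * sB)) - μ • (1 : K →L[ℂ] K)
      = (1 - μ) • (1 - sB * M) := by
    rw [smul_sub, hsbm, smul_smul, hkey, sub_smul, one_smul]
    abel
  have hker1 : LinearMap.ker ((((1 - (2 * Complex.I) • (sB * R * sB)) - μ • (1 : K →L[ℂ] K)) : K →L[ℂ] K) : K →ₗ[ℂ] K)
      = LinearMap.ker ((1 - sB * M : K →L[ℂ] K) : K →ₗ[ℂ] K) := by
    rw [hop1]
    ext x
    simp [LinearMap.mem_ker, smul_eq_zero, hμ1]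
  -- operator identity 2
  have hMsB : M * sB = α • (R * B) := by
    rw [hMdef, smul_mul_assoc, mul_assoc, hsB2]
  have hcsmul : ((c2 / s : ℝ)) • B = (((c2 / s : ℝ) : ℂ)) • B := by
    ext x
    simp only [ContinuousLinearMap.smul_apply, ← Complex.coe_smul]
  have hop2 : J' + A + ((c2 / s : ℝ)) • B = T * (1 - M * sB) := by
    rw [mul_sub, mul_one, hMsB, mul_smul_comm, ← mul_assoc, hR, one_mul, hcsmul, hTdef,
      hαdef, sub_smul]
    abel
  have hker2 : LinearMap.ker ((J' + A + ((c2 / s : ℝ)) • B : K →L[ℂ] K) : K →ₗ[ℂ] K) = LinearMap.ker ((1 - M * sB : K →L[ℂ] K) : K →ₗ[ℂ] K) := by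
    rw [hop2]
    ext x
    simp only [LinearMap.mem_ker, ContinuousLinearMap.coe_coe, ContinuousLinearMap.mul_apply]
    constructor
    · intro h
      have h2 : (1 - M * sB) x = (R * T) ((1 - M * sB) x) := by
        rw [hR']
        simp
      rw [h2, ContinuousLinearMap.mul_apply, h, map_zero]
    · intro h
      rw [h, map_zero]
  rw [hker1, hker2]
  exact rank_ker_one_sub_mul sB M
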